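/- The seven weight-5 vectors in 𝔽₂¹⁵ with supports {1,2,4,8,15}, {1,2,5,10,12}, {1,2,6,11,14}, {1,2,7,9,13}, {1,4,6,9,10}, {1,4,7,12,14}, {1,8,10,13,14} all lie in the Hamming code C = ker H, are linearly independent modulo C⊥, and together with C⊥ span C. -/

import Mathlib

/-- The 4×15 parity-check matrix over 𝔽₂ whose j-th column is the binary
representation of j (columns indexed 1,…,15). -/
def Hmat : Matrix (Fin 4) (Fin 15) (ZMod 2) :=
  fun r i => if Nat.testBit ((i : ℕ) + 1) (3 - (r : ℕ)) then 1 else 0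

/-- The classical [15,11,3] Hamming code `C = ker H`. -/
def HammingCode : Submodule (ZMod 2) (Fin 15 → ZMod 2) :=
  LinearMap.ker Hmat.mulVecLin

/-- The dual code `C⊥` (row space of H). -/
def DualCode : Submodule (ZMod 2) (Fin 15 → ZMod 2) :=
  Submodule.span (ZMod 2) (Set.range fun r => Hmat r)

/-- The (1-indexed) supports of the seven weight-5 logical-operator vectors. -/
def supp : Fin 7 → List ℕ :=
  ![[1,2,4,8,15], [1,2,5,10,12], [1,2,6,11,14], [1,2,7,9,13],
    [1,4,6,9,10], [1,4,7,12,14], [1,8,10,13,14]]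

/-- The seven logical-operator vectors in 𝔽₂¹⁵. -/
def lov (j : Fin 7) : Fin 15 → ZMod 2 :=
  fun i => if ((i : ℕ) + 1) ∈ supp j then 1 else 0

/- Auxiliary data: explicit certificate matrices computed offline. -/

/-- Columns: the 4 rows of `Hmat` followed by the 7 vectors `lov`. -/
def Vtmat : Matrix (Fin 15) (Fin 11) (ZMod 2) :=
  !![0, 0, 0, 1, 1, 1, 1, 1, 1, 1, 1;
     0, 0, 1, 0, 1, 1, 1, 1, 0, 0, 0;
     0, 0, 1, 1, 0, 0, 0, 0, 0, 0, 0;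
     0, 1, 0, 0, 1, 0, 0, 0, 1, 1, 0;
     0, 1, 0, 1, 0, 1, 0, 0, 0, 0, 0;
     0, 1, 1, 0, 0, 0, 1, 0, 1, 0, 0;
     0, 1, 1, 1, 0, 0, 0, 1, 0, 1, 0;
     1, 0, 0, 0, 1, 0, 0, 0, 0, 0, 1;
     1, 0, 0, 1, 0, 0, 0, 1, 1, 0, 0;
     1, 0, 1, 0, 0, 1, 0, 0, 1, 0, 1;
     1, 0, 1, 1, 0, 0, 1, 0, 0, 0, 0;
     1, 1, 0, 0, 0, 1, 0, 0, 0, 1, 0;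
     1, 1, 0, 1, 0, 0, 0, 1, 0, 0, 1;
     1, 1, 1, 0, 0, 0, 1, 0, 0, 1, 1;
     1, 1, 1, 1, 1, 0, 0, 0, 0, 0, 0]

def Pmat : Matrix (Fin 11) (Fin 15) (ZMod 2) :=
  !![0, 1, 0, 0, 1, 1, 1, 1, 0, 1, 0, 1, 0, 0, 0;
     1, 0, 1, 1, 1, 1, 1, 0, 0, 1, 0, 1, 0, 0, 0;
     0, 1, 0, 1, 1, 1, 1, 0, 0, 0, 0, 0, 0, 0, 0;
     0, 1, 1, 1, 1, 1, 1, 0, 0, 0, 0, 0, 0, 0, 0;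
     0, 0, 0, 0, 0, 0, 1, 1, 1, 1, 0, 1, 0, 0, 0;
     1, 1, 0, 0, 1, 0, 0, 0, 0, 1, 0, 1, 0, 0, 0;
     0, 1, 1, 1, 0, 0, 0, 0, 1, 0, 0, 1, 0, 0, 0;
     1, 0, 1, 0, 0, 1, 0, 1, 0, 0, 0, 1, 0, 0, 0;
     1, 0, 0, 1, 0, 1, 0, 0, 1, 1, 0, 0, 0, 0, 0;
     0, 0, 1, 1, 1, 0, 0, 1, 0, 1, 0, 0, 0, 0, 0;
     0, 1, 0, 0, 1, 1, 0, 1, 1, 0, 0, 0, 0, 0, 0]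

def Mmat : Matrix (Fin 15) (Fin 4) (ZMod 2) :=
  !![0, 0, 0, 0;
     0, 0, 0, 0;
     0, 0, 0, 0;
     0, 0, 0, 0;
     0, 0, 0, 0;
     0, 0, 0, 0;
     0, 0, 0, 0;
     0, 0, 0, 0;
     0, 0, 0, 0;
     0, 0, 0, 0;
     1, 1, 0, 0;
     0, 0, 0, 0;
     1, 0, 1, 0;
     1, 0, 0, 1;
     0, 1, 1, 1]

/-- Dual-basis vectors: `Wmat k` lies in `ker Hmat` and pairs to `δ_{kj}` with `lov j`. -/
def Wmat : Matrix (Fin 7) (Fin 15) (ZMod 2) :=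
  !![0, 0, 0, 0, 0, 0, 1, 1, 1, 1, 0, 1, 0, 0, 0;
     1, 1, 0, 0, 1, 0, 0, 0, 0, 1, 0, 1, 0, 0, 0;
     0, 1, 1, 1, 0, 0, 0, 0, 1, 0, 0, 1, 0, 0, 0;
     1, 0, 1, 0, 0, 1, 0, 1, 0, 0, 0, 1, 0, 0, 0;
     1, 0, 0, 1, 0, 1, 0, 0, 1, 1, 0, 0, 0, 0, 0;
     0, 0, 1, 1, 1, 0, 0, 1, 0, 1, 0, 0, 0, 0, 0;
     0, 1, 0, 0, 1, 1, 0, 1, 1, 0, 0, 0, 0, 0, 0]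

lemma lov_ker : ∀ j, Hmat.mulVec (lov j) = 0 := by decide
lemma row_ker : ∀ r, Hmat.mulVec (Hmat r) = 0 := by decide
lemma W_row : ∀ r, Wmat.mulVec (Hmat r) = 0 := by decide
lemma W_lov : ∀ j, Wmat.mulVec (lov j) = fun k => if k = j then 1 else 0 := by decide
lemma key_identity : Vtmat * Pmat + Mmat * Hmat = 1 := by decide
lemma col_cases : ∀ k : Fin 11,
    (∃ r, (fun i => Vtmat i k) = Hmat r) ∨ (∃ j, (fun i => Vtmat i k) = lov j) := by
  intro k
  fin_cases k
  · exact Or.inl ⟨0, by decide⟩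
  · exact Or.inl ⟨1, by decide⟩
  · exact Or.inl ⟨2, by decide⟩
  · exact Or.inl ⟨3, by decide⟩
  · exact Or.inr ⟨0, by decide⟩
  · exact Or.inr ⟨1, by decide⟩
  · exact Or.inr ⟨2, by decide⟩
  · exact Or.inr ⟨3, by decide⟩
  · exact Or.inr ⟨4, by decide⟩
  · exact Or.inr ⟨5, by decide⟩
  · exact Or.inr ⟨6, by decide⟩

lemma mem_HammingCode_iff (x : Fin 15 → ZMod 2) :
    x ∈ HammingCode ↔ Hmat.mulVec x = 0 := by
  simp [HammingCode, LinearMap.mem_ker, Matrix.mulVecLin_apply]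

/-- The seven weight-5 vectors all lie in the Hamming code, are linearly
independent modulo `C⊥`, and together with `C⊥` span `C`. -/
theorem stmt_11 :
    (∀ j, lov j ∈ HammingCode) ∧
    (∀ a : Fin 7 → ZMod 2, (∑ j, a j • lov j) ∈ DualCode → a = 0) ∧
    DualCode ⊔ Submodule.span (ZMod 2) (Set.range lov) = HammingCode := by
  refine ⟨fun j => (mem_HammingCode_iff _).2 (lov_ker j), ?_, ?_⟩
  · intro a ha
    have hker : DualCode ≤ LinearMap.ker Wmat.mulVecLin := by
      rw [DualCode, Submodule.span_le]
      rintro _ ⟨r, rfl⟩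
      simp [LinearMap.mem_ker, Matrix.mulVecLin_apply, W_row r]
    have h0 : Wmat.mulVecLin (∑ j, a j • lov j) = 0 := hker ha
    rw [map_sum] at h0
    simp only [map_smul, Matrix.mulVecLin_apply, W_lov] at h0
    funext k
    have := congrFun h0 k
    simpa [Finset.sum_apply, Finset.sum_ite_eq', smul_eq_mul] using this
  · apply le_antisymm
    · apply sup_le
      · rw [DualCode, Submodule.span_le]
        rintro _ ⟨r, rfl⟩
        exact (mem_HammingCode_iff _).2 (row_ker r)
      · rw [Submodule.span_le]
        rintro _ ⟨j, rfl⟩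
        exact (mem_HammingCode_iff _).2 (lov_ker j)
    · intro x hx
      have hx0 : Hmat.mulVec x = 0 := (mem_HammingCode_iff x).1 hx
      have hxeq : x = Vtmat.mulVec (Pmat.mulVec x) := by
        have h1 : (Vtmat * Pmat + Mmat * Hmat).mulVec x = x := by
          rw [key_identity, Matrix.one_mulVec]
        rw [Matrix.add_mulVec, ← Matrix.mulVec_mulVec, ← Matrix.mulVec_mulVec,
          hx0, Matrix.mulVec_zero, add_zero] at h1
        exact h1.symm
      have hsum : Vtmat.mulVec (Pmat.mulVec x) =
          ∑ k : Fin 11, (Pmat.mulVec x) k • (fun i => Vtmat i k) := by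
        funext i
        simp [Matrix.mulVec, dotProduct, Finset.sum_apply, mul_comm]
      rw [hxeq, hsum]
      apply Submodule.sum_mem
      intro k _
      apply Submodule.smul_mem
      rcases col_cases k with ⟨r, hr⟩ | ⟨j, hj⟩
      · exact Submodule.mem_sup_left (hr ▸ Submodule.subset_span ⟨r, rfl⟩)
      · exact Submodule.mem_sup_right (hj ▸ Submodule.subset_span ⟨j, rfl⟩)
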